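/- arXiv:1908.03551 — 4 statements merged into one kernel-verified Lean document; each statement's English description precedes it below -/
import Mathlib

section
/- For all words u, v, z over Σ: u ++ v ∼ z if and only if u ∼⊲ z ⊳∼ v. -/
open RegularExpression
open scoped Classical

universe u

variable {α : Type u}

/-- Two words are independent if every letter of the first is independent
of every letter of the second. -/
def WIndep (I : α → α → Prop) (u v : List α) : Prop :=
  ∀ a ∈ u, ∀ b ∈ v, I a b

/-- Trace equivalence: the least equivalence relation on words containing
all pairs (x ++ [a,b] ++ y, x ++ [b,a] ++ y) with a I b. -/
inductive TrEq (I : α → α → Prop) : List α → List α → Prop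
  | swap (x y : List α) {a b : α} : I a b → TrEq I (x ++ [a, b] ++ y) (x ++ [b, a] ++ y)
  | refl (u : List α) : TrEq I u u
  | symm {u v : List α} : TrEq I u v → TrEq I v u
  | trans {u v w : List α} : TrEq I u v → TrEq I v w → TrEq I u w

/-- Trace closure of a language. -/
def TrClosure (I : α → α → Prop) (L : Set (List α)) : Set (List α) :=
  {w | ∃ z ∈ L, TrEq I w z}

/-- u ⊲ z ⊳ v with exactly n blocks of u: there are nonempty words u₁,…,uₙ and
words v₀,…,vₙ (with v₁,…,v_{n-1} nonempty) such that u = u₁⋯uₙ, v = v₀⋯vₙ,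
z = v₀u₁v₁⋯uₙvₙ and vⱼ I uᵢ whenever j < i. -/
def ScatN (I : α → α → Prop) (n : ℕ) (u z v : List α) : Prop :=
  ∃ us vs : ℕ → List α,
    (∀ i, 1 ≤ i → i ≤ n → us i ≠ []) ∧
    (∀ j, 1 ≤ j → j ≤ n - 1 → vs j ≠ []) ∧
    u = ((List.range n).map (fun i => us (i + 1))).flatten ∧
    v = ((List.range (n + 1)).map vs).flatten ∧
    z = vs 0 ++ ((List.range n).map (fun i => us (i + 1) ++ vs (i + 1))).flatten ∧
    (∀ i j, 1 ≤ i → i ≤ n → j < i → WIndep I (vs j) (us i))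

/-- u ⊲ z ⊳ v -/
def Scat (I : α → α → Prop) (u z v : List α) : Prop :=
  ∃ n, ScatN I n u z v

/-- u ∼⊲ z ⊳ v -/
def EqScat (I : α → α → Prop) (u z v : List α) : Prop :=
  ∃ u', TrEq I u u' ∧ Scat I u' z v

/-- u ∼⊲ z ⊳∼ v -/
def EqScatEq (I : α → α → Prop) (u z v : List α) : Prop :=
  ∃ u' v', TrEq I u u' ∧ Scat I u' z v' ∧ TrEq I v' v

/-- u ∼⊲_N z ⊳∼ v : as EqScatEq, with the number of blocks bounded by N -/
def EqScatEqLe (I : α → α → Prop) (N : ℕ) (u z v : List α) : Prop :=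
  ∃ u' v', TrEq I u u' ∧ (∃ n ≤ N, ScatN I n u' z v') ∧ TrEq I v' v

/-- Reordering concatenation of words. -/
def rconc (I : α → α → Prop) : List α → List α → Set (List α)
  | [], v => {v}
  | a :: u, [] => {a :: u}
  | a :: u, b :: v =>
      (List.cons a) '' rconc I u (b :: v) ∪
      {z | WIndep I (a :: u) [b] ∧ ∃ w ∈ rconc I (a :: u) v, z = b :: w}
termination_by u v => u.length + v.length

/-- Reordering concatenation lifted to languages. -/
def rconcL (I : α → α → Prop) (L L' : Set (List α)) : Set (List α) :=
  {z | ∃ u ∈ L, ∃ v ∈ L', z ∈ rconc I u v}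

/-- The reorderable part of a language w.r.t. a word. -/
def RPart (I : α → α → Prop) (u : List α) (L : Set (List α)) : Set (List α) :=
  {v ∈ L | WIndep I v u}

/-- The reordering derivative of a language along a word. -/
def RDeriv (I : α → α → Prop) (u : List α) (L : Set (List α)) : Set (List α) :=
  {v | ∃ z ∈ L, EqScat I u z v}

/-- Syntactic reorderable part of a regexp w.r.t. a letter. -/
noncomputable def Rexp (I : α → α → Prop) (a : α) : RegularExpression α → RegularExpression α
  | zero => zero
  | epsilon => epsilon
  | char b => if I a b then char b else zero
  | plus E F => plus (Rexp I a E) (Rexp I a F)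
  | comp E F => comp (Rexp I a E) (Rexp I a F)
  | RegularExpression.star E => star (Rexp I a E)

/-- Brzozowski reordering derivative of a regexp along a letter. -/
noncomputable def Dexp (I : α → α → Prop) (a : α) : RegularExpression α → RegularExpression α
  | zero => zero
  | epsilon => zero
  | char b => if a = b then epsilon else zero
  | plus E F => plus (Dexp I a E) (Dexp I a F)
  | comp E F => plus (comp (Dexp I a E) F) (comp (Rexp I a E) (Dexp I a F))
  | RegularExpression.star E => comp (star (Rexp I a E)) (comp (Dexp I a E) (star E))

/-- Syntactic reorderable part along a word. -/
noncomputable def RexpW (I : α → α → Prop) (u : List α) (E : RegularExpression α) :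
    RegularExpression α :=
  u.foldl (fun E a => Rexp I a E) E

/-- Brzozowski reordering derivative along a word. -/
noncomputable def DexpW (I : α → α → Prop) (u : List α) (E : RegularExpression α) :
    RegularExpression α :=
  u.foldl (fun E a => Dexp I a E) E

/-- Antimirov reordering parts-of-derivatives along a letter. -/
inductive Antim (I : α → α → Prop) : RegularExpression α → α → RegularExpression α → Prop
  | chr (a : α) : Antim I (char a) a epsilon
  | plusL {E F : RegularExpression α} {a E'} : Antim I E a E' → Antim I (plus E F) a E'
  | plusR {E F : RegularExpression α} {a F'} : Antim I F a F' → Antim I (plus E F) a F'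
  | compL {E F : RegularExpression α} {a E'} : Antim I E a E' → Antim I (comp E F) a (comp E' F)
  | compR {E F : RegularExpression α} {a F'} :
      Antim I F a F' → Antim I (comp E F) a (comp (Rexp I a E) F')
  | st {E : RegularExpression α} {a E'} :
      Antim I E a E' → Antim I (star E) a (comp (star (Rexp I a E)) (comp E' (star E)))

/-- Antimirov reordering parts-of-derivatives along a word. -/
inductive AntimW (I : α → α → Prop) : RegularExpression α → List α → RegularExpression α → Prop
  | nil (E : RegularExpression α) : AntimW I E [] E
  | snoc {E : RegularExpression α} {u E' a E''} :
      AntimW I E u E' → Antim I E' a E'' → AntimW I E (u ++ [a]) E''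

/-- The dependence graph of a word: vertices are positions; distinct positions
are adjacent when their letters are not independent. -/
def depGraph (I : α → α → Prop) (w : List α) : SimpleGraph (Fin w.length) where
  Adj i j := i ≠ j ∧ ¬(I (w.get i) (w.get j) ∧ I (w.get j) (w.get i))
  symm := by
    constructor
    intro i j h
    exact ⟨h.1.symm, fun hc => h.2 ⟨hc.2, hc.1⟩⟩
  loopless := by
    constructor
    intro i h
    exact h.1 rfl

/-- A word is connected if its dependence graph is connected. -/
def WordConnected (I : α → α → Prop) (w : List α) : Prop :=
  (depGraph I w).Preconnected

/-- Least fixed point star for the trace-closing semantics. -/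
def starI (I : α → α → Prop) (L : Set (List α)) : Set (List α) :=
  sInf {X | {([] : List α)} ∪ rconcL I L X ⊆ X}

/-- Trace-closing semantics of regular expressions. -/
def langI (I : α → α → Prop) : RegularExpression α → Set (List α)
  | zero => ∅
  | epsilon => {[]}
  | char a => {[a]}
  | plus E F => langI I E ∪ langI I F
  | comp E F => rconcL I (langI I E) (langI I F)
  | RegularExpression.star E => starI I (langI I E)

/-- L has (scattering) rank at most N. -/
def HasRankLe (I : α → α → Prop) (L : Set (List α)) (N : ℕ) : Prop :=
  ∀ u v, u ++ v ∈ TrClosure I L → ∃ z ∈ L, EqScatEqLe I N u z v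

/-- L has uniform (scattering) rank at most N. -/
def HasUniformRankLe (I : α → α → Prop) (L : Set (List α)) (N : ℕ) : Prop :=
  ∀ w ∈ TrClosure I L, ∃ z ∈ L, ∀ u v, w = u ++ v → EqScatEqLe I N u z v

/-- Star-connected regular expressions. -/
inductive StarConnected (I : α → α → Prop) : RegularExpression α → Prop
  | zero : StarConnected I zero
  | epsilon : StarConnected I epsilon
  | chr (a : α) : StarConnected I (char a)
  | plus {E F : RegularExpression α} :
      StarConnected I E → StarConnected I F → StarConnected I (plus E F)
  | comp {E F : RegularExpression α} :
      StarConnected I E → StarConnected I F → StarConnected I (comp E F)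
  | st {E : RegularExpression α} :
      StarConnected I E → (∀ w ∈ E.matches', WordConnected I w) → StarConnected I (star E)

/-- Refined Antimirov reordering parts-of-derivatives along a letter. -/
inductive RAntim (I : α → α → Prop) :
    RegularExpression α → α → RegularExpression α → RegularExpression α → Prop
  | chr (a : α) : RAntim I (char a) a epsilon epsilon
  | plusL {E F : RegularExpression α} {a El Er} :
      RAntim I E a El Er → RAntim I (plus E F) a El Er
  | plusR {E F : RegularExpression α} {a Fl Fr} :
      RAntim I F a Fl Fr → RAntim I (plus E F) a Fl Fr
  | compL {E F : RegularExpression α} {a El Er} :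
      RAntim I E a El Er → RAntim I (comp E F) a El (comp Er F)
  | compR {E F : RegularExpression α} {a Fl Fr} :
      RAntim I F a Fl Fr → RAntim I (comp E F) a (comp (Rexp I a E) Fl) Fr
  | st {E : RegularExpression α} {a El Er} :
      RAntim I E a El Er →
      RAntim I (star E) a (comp (star (Rexp I a E)) El) (comp Er (star E))

/-- Refined Antimirov relation lifted to nonempty lists of regexps (unbounded). -/
inductive RAntimL (I : α → α → Prop) :
    List (RegularExpression α) → α → List (RegularExpression α) → Prop
  | split {Γ Δ : List (RegularExpression α)} {E : RegularExpression α} {a El Er} :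
      RAntim I E a El Er →
      RAntimL I (Γ ++ E :: Δ) a (Γ.map (Rexp I a) ++ El :: Er :: Δ)
  | dropL {Γ Δ : List (RegularExpression α)} {E : RegularExpression α} {a El Er} :
      RAntim I E a El Er → [] ∈ El.matches' → Γ ≠ [] →
      RAntimL I (Γ ++ E :: Δ) a (Γ.map (Rexp I a) ++ Er :: Δ)
  | dropR {Γ Δ : List (RegularExpression α)} {E : RegularExpression α} {a El Er} :
      RAntim I E a El Er → [] ∈ Er.matches' → Δ ≠ [] →
      RAntimL I (Γ ++ E :: Δ) a (Γ.map (Rexp I a) ++ El :: Δ)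
  | dropBoth {Γ Δ : List (RegularExpression α)} {E : RegularExpression α} {a El Er} :
      RAntim I E a El Er → [] ∈ El.matches' → [] ∈ Er.matches' → Γ ≠ [] → Δ ≠ [] →
      RAntimL I (Γ ++ E :: Δ) a (Γ.map (Rexp I a) ++ Δ)

/-- Refined Antimirov relation along a word (unbounded). -/
inductive RAntimW (I : α → α → Prop) :
    RegularExpression α → List α → List (RegularExpression α) → Prop
  | nil (E : RegularExpression α) : RAntimW I E [] [E]
  | snoc {E : RegularExpression α} {u Γ a Γ'} :
      RAntimW I E u Γ → RAntimL I Γ a Γ' → RAntimW I E (u ++ [a]) Γ'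

/-- N-bounded refined Antimirov relation lifted to nonempty lists of regexps. -/
inductive RAntimLN (I : α → α → Prop) (N : ℕ) :
    List (RegularExpression α) → α → List (RegularExpression α) → Prop
  | split {Γ Δ : List (RegularExpression α)} {E : RegularExpression α} {a El Er} :
      RAntim I E a El Er → Γ.length + Δ.length < N →
      RAntimLN I N (Γ ++ E :: Δ) a (Γ.map (Rexp I a) ++ El :: Er :: Δ)
  | dropL {Γ Δ : List (RegularExpression α)} {E : RegularExpression α} {a El Er} :
      RAntim I E a El Er → [] ∈ El.matches' → Γ ≠ [] →
      RAntimLN I N (Γ ++ E :: Δ) a (Γ.map (Rexp I a) ++ Er :: Δ)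
  | dropR {Γ Δ : List (RegularExpression α)} {E : RegularExpression α} {a El Er} :
      RAntim I E a El Er → [] ∈ Er.matches' → Δ ≠ [] →
      RAntimLN I N (Γ ++ E :: Δ) a (Γ.map (Rexp I a) ++ El :: Δ)
  | dropBoth {Γ Δ : List (RegularExpression α)} {E : RegularExpression α} {a El Er} :
      RAntim I E a El Er → [] ∈ El.matches' → [] ∈ Er.matches' → Γ ≠ [] → Δ ≠ [] →
      RAntimLN I N (Γ ++ E :: Δ) a (Γ.map (Rexp I a) ++ Δ)

/-- N-bounded refined Antimirov relation along a word. -/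
inductive RAntimWN (I : α → α → Prop) (N : ℕ) :
    RegularExpression α → List α → List (RegularExpression α) → Prop
  | nil (E : RegularExpression α) : RAntimWN I N E [] [E]
  | snoc {E : RegularExpression α} {u Γ a Γ'} :
      RAntimWN I N E u Γ → RAntimLN I N Γ a Γ' → RAntimWN I N E (u ++ [a]) Γ'



section Stmt0Aux

variable {I : α → α → Prop}

/-! ### Basic TrEq lemmas -/

lemma treq_append_right {u u' : List α} (h : TrEq I u u') (v : List α) :
    TrEq I (u ++ v) (u' ++ v) := by
  induction h with
  | @swap x y a b hab =>
      simpa [List.append_assoc] using TrEq.swap (I := I) x (y ++ v) hab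
  | refl w => exact TrEq.refl _
  | symm _ ih => exact ih.symm
  | trans _ _ ih1 ih2 => exact ih1.trans ih2

lemma treq_append_left {v v' : List α} (h : TrEq I v v') (u : List α) :
    TrEq I (u ++ v) (u ++ v') := by
  induction h with
  | @swap x y a b hab =>
      simpa [List.append_assoc] using TrEq.swap (I := I) (u ++ x) y hab
  | refl w => exact TrEq.refl _
  | symm _ ih => exact ih.symm
  | trans _ _ ih1 ih2 => exact ih1.trans ih2

lemma treq_cons {v v' : List α} (h : TrEq I v v') (a : α) :
    TrEq I (a :: v) (a :: v') :=
  treq_append_left h [a]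

lemma treq_mem {u v : List α} (h : TrEq I u v) (c : α) : c ∈ u ↔ c ∈ v := by
  induction h with
  | @swap x y a b hab => simp [List.mem_append]; tauto
  | refl w => exact Iff.rfl
  | symm _ ih => exact ih.symm
  | trans _ _ ih1 ih2 => exact ih1.trans ih2

/-! ### rconc basic lemmas -/

lemma mem_rconc_nil_left {v z : List α} : z ∈ rconc I [] v ↔ z = v := by
  rw [rconc]; exact Set.mem_singleton_iff

lemma mem_rconc_cons_nil {a : α} {u z : List α} :
    z ∈ rconc I (a :: u) [] ↔ z = a :: u := by
  rw [rconc]; exact Set.mem_singleton_iff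

lemma mem_rconc_cons_cons {a b : α} {u v z : List α} :
    z ∈ rconc I (a :: u) (b :: v) ↔
      (∃ w ∈ rconc I u (b :: v), a :: w = z) ∨
      (WIndep I (a :: u) [b] ∧ ∃ w ∈ rconc I (a :: u) v, z = b :: w) := by
  rw [rconc]
  simp only [Set.mem_union, Set.mem_image, Set.mem_setOf_eq]

lemma rconc_consU {u v z : List α} (a : α) (h : z ∈ rconc I u v) :
    a :: z ∈ rconc I (a :: u) v := by
  cases v with
  | nil =>
      cases u with
      | nil =>
          rw [mem_rconc_nil_left] at h
          subst h
          rw [mem_rconc_cons_nil]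
      | cons c u' =>
          rw [mem_rconc_cons_nil] at h ⊢
          rw [h]
  | cons b v' =>
      rw [mem_rconc_cons_cons]
      exact Or.inl ⟨z, h, rfl⟩

lemma rconc_self_right (u : List α) : u ∈ rconc I u [] := by
  cases u with
  | nil => rw [mem_rconc_nil_left]
  | cons a u => rw [mem_rconc_cons_nil]

lemma rconc_consV {u v z : List α} {b : α} (hb : WIndep I u [b]) (h : z ∈ rconc I u v) :
    b :: z ∈ rconc I u (b :: v) := by
  cases u with
  | nil =>
      rw [mem_rconc_nil_left] at h ⊢
      rw [h]
  | cons a u' =>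
      rw [mem_rconc_cons_cons]
      exact Or.inr ⟨hb, z, h, rfl⟩

lemma rconc_appendU {u v z : List α} (w : List α) (h : z ∈ rconc I u v) :
    w ++ z ∈ rconc I (w ++ u) v := by
  induction w with
  | nil => simpa
  | cons c w ih => exact rconc_consU c ih

lemma rconc_prependV {u v z : List α} (h : z ∈ rconc I u v) :
    ∀ {w : List α}, (∀ c ∈ w, WIndep I u [c]) → w ++ z ∈ rconc I u (w ++ v) := by
  intro w
  induction w with
  | nil => intro _; simpa
  | cons c w ih =>
      intro hw
      exact rconc_consV (hw c (by simp)) (ih (fun d hd => hw d (by simp [hd])))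

lemma rconc_self_append (u v : List α) : u ++ v ∈ rconc I u v := by
  induction u with
  | nil => rw [List.nil_append, mem_rconc_nil_left]
  | cons a u ih => exact rconc_consU a ih

/-! ### rconc implies trace equivalence -/

lemma treq_comm_cons {b : α} {w : List α} :
    ∀ {u : List α}, (∀ c ∈ u, I c b) → TrEq I (u ++ b :: w) (b :: (u ++ w)) := by
  intro u
  induction u with
  | nil => intro _; exact TrEq.refl _
  | cons a u ih =>
      intro h
      have h1 : TrEq I (a :: (u ++ b :: w)) (a :: (b :: (u ++ w))) :=
        treq_cons (ih (fun c hc => h c (by simp [hc]))) a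
      have h2 : TrEq I (a :: b :: (u ++ w)) (b :: a :: (u ++ w)) := by
        simpa using TrEq.swap (I := I) [] (u ++ w) (h a (by simp))
      exact h1.trans h2

lemma treq_of_rconc :
    ∀ u v z : List α, z ∈ rconc I u v → TrEq I (u ++ v) z := by
  have main : ∀ (N : ℕ) (u v z : List α), u.length + v.length ≤ N → z ∈ rconc I u v →
      TrEq I (u ++ v) z := by
    intro N
    induction N with
    | zero =>
        intro u v z h1 h2
        match u, v with
        | [], v =>
            rw [mem_rconc_nil_left] at h2
            subst h2; exact TrEq.refl _
        | a :: u, v => simp at h1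
    | succ N ih =>
        intro u v z h1 h2
        match u, v with
        | [], v =>
            rw [mem_rconc_nil_left] at h2
            subst h2; exact TrEq.refl _
        | a :: u, [] =>
            rw [mem_rconc_cons_nil] at h2
            subst h2; simpa using TrEq.refl (I := I) (a :: u)
        | a :: u, b :: v =>
            rw [mem_rconc_cons_cons] at h2
            rcases h2 with ⟨w, hw, hz⟩ | ⟨hind, w, hw, rfl⟩
            · subst hz
              exact treq_cons (ih u (b :: v) w (by simp at h1 ⊢; omega) hw) a
            · have hc1 : TrEq I ((a :: u) ++ b :: v) (b :: ((a :: u) ++ v)) :=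
                treq_comm_cons (fun c hc => hind c hc b (by simp))
              exact hc1.trans (treq_cons (ih (a :: u) v w (by simp at h1 ⊢; omega) hw) b)
  exact fun u v z => main (u.length + v.length) u v z le_rfl

/-! ### flatten/range helpers -/

lemma flatten_range_succ (f : ℕ → List α) (n : ℕ) :
    ((List.range (n + 1)).map f).flatten
      = f 0 ++ ((List.range n).map (fun i => f (i + 1))).flatten := by
  rw [List.range_succ_eq_map]
  simp [List.map_map, Function.comp_def]

lemma flatten_range_congr {f g : ℕ → List α} {n : ℕ} (h : ∀ i < n, f i = g i) :
    ((List.range n).map f).flatten = ((List.range n).map g).flatten := by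
  congr 1
  apply List.map_congr_left
  intro i hi
  exact h i (List.mem_range.mp hi)

lemma mem_flatten_range {f : ℕ → List α} {n : ℕ} {c : α} (i : ℕ) (hi : i < n)
    (hc : c ∈ f i) : c ∈ ((List.range n).map f).flatten := by
  rw [List.mem_flatten]
  exact ⟨f i, List.mem_map.mpr ⟨i, List.mem_range.mpr hi, rfl⟩, hc⟩

lemma mem_of_mem_block {us : ℕ → List α} {n i : ℕ} (h1 : 1 ≤ i) (h2 : i ≤ n) {c : α}
    (hc : c ∈ us i) : c ∈ ((List.range n).map (fun i => us (i + 1))).flatten := by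
  apply mem_flatten_range (i - 1) (by omega)
  have hh : i - 1 + 1 = i := by omega
  rw [hh]; exact hc

/-! ### ScatN constructors -/

lemma scatN_nil (v : List α) : ScatN I 0 [] v v := by
  refine ⟨fun _ => [], fun _ => v, ?_, ?_, ?_, ?_, ?_, ?_⟩
  · intro i h1 h2; exact absurd h2 (by omega)
  · intro j h1 h2; exact absurd h2 (by omega)
  · simp
  · simp
  · simp
  · intro i j h1 h2 h3; exact absurd h2 (by omega)

lemma scatN_self (u : List α) (hu : u ≠ []) : ScatN I 1 u u [] := by
  refine ⟨fun _ => u, fun _ => [], ?_, ?_, ?_, ?_, ?_, ?_⟩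
  · intro i _ _; exact hu
  · intro j h1 h2; exact absurd (h1.trans h2) (by norm_num)
  · simp
  · simp
  · simp
  · intro i j _ _ _ c hc; exact absurd hc (by simp)

lemma scatN_consV {n : ℕ} {u z v : List α} {b : α}
    (hb : ∀ c ∈ u, I b c) (h : ScatN I n u z v) :
    ScatN I n u (b :: z) (b :: v) := by
  obtain ⟨us, vs, hus, hvs, hu, hv, hz, hcond⟩ := h
  refine ⟨us, fun j => if j = 0 then b :: vs 0 else vs j, hus, ?_, hu, ?_, ?_, ?_⟩
  · intro j h1 h2
    have hj : j ≠ 0 := by omega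
    simp only [if_neg hj]
    exact hvs j h1 h2
  · rw [flatten_range_succ]
    simp only [if_pos rfl]
    rw [flatten_range_congr (g := fun i => vs (i + 1)) (fun i _ => by simp)]
    rw [hv, flatten_range_succ]
    simp
  · rw [hz]
    simp only [if_pos rfl]
    rw [flatten_range_congr
        (f := fun i => us (i + 1) ++ (if i + 1 = 0 then b :: vs 0 else vs (i + 1)))
        (g := fun i => us (i + 1) ++ vs (i + 1)) (fun i _ => by simp)]
    simp
  · intro i j h1 h2 h3
    by_cases hj : j = 0
    · subst hj
      simp only [if_pos rfl]
      intro c hc d hd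
      rcases List.mem_cons.mp hc with rfl | hc2
      · refine hb d ?_
        rw [hu]
        exact mem_of_mem_block h1 h2 hd
      · exact hcond i 0 h1 h2 h3 c hc2 d hd
    · simp only [if_neg hj]
      exact hcond i j h1 h2 h3

lemma scatN_consU {n : ℕ} {u z v : List α} (a : α) (h : ScatN I n u z v) :
    Scat I (a :: u) (a :: z) v := by
  obtain ⟨us, vs, hus, hvs, hu, hv, hz, hcond⟩ := h
  rcases Nat.eq_zero_or_pos n with rfl | hn
  · -- n = 0 : u = [], z = v = vs 0
    have hu0 : u = [] := by simpa using hu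
    have hz0 : z = vs 0 := by simpa using hz
    have hv0 : v = vs 0 := by
      rw [hv, flatten_range_succ]; simp
    refine ⟨1, fun _ => [a], fun j => if j = 0 then [] else v, ?_, ?_, ?_, ?_, ?_, ?_⟩
    · intro i _ _; simp
    · intro j h1 h2; exact absurd (h1.trans h2) (by norm_num)
    · simp [hu0]
    · rw [flatten_range_succ]
      simp
    · rw [flatten_range_succ]
      simp [hz0, hv0]
    · intro i j h1 h2 h3
      have hj : j = 0 := by omega
      subst hj
      intro c hc; exact absurd hc (by simp)
  · obtain ⟨m, rfl⟩ : ∃ m, n = m + 1 := ⟨n - 1, by omega⟩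
    by_cases h0 : vs 0 = []
    · -- merge a into the first u-block
      refine ⟨m + 1, fun i => if i = 1 then a :: us 1 else us i, vs, ?_, hvs, ?_, hv, ?_, ?_⟩
      · intro i h1 h2
        by_cases hi : i = 1
        · simp [hi]
        · simp only [if_neg hi]; exact hus i h1 h2
      · rw [flatten_range_succ]
        simp only [Nat.zero_add, if_pos rfl]
        rw [flatten_range_congr (f := fun i => if i + 1 + 1 = 1 then a :: us 1 else us (i + 1 + 1))
            (g := fun i => us (i + 1 + 1)) (fun i _ => by simp)]
        rw [hu, flatten_range_succ]
        simp
      · rw [flatten_range_succ]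
        simp only [Nat.zero_add, if_pos rfl]
        rw [flatten_range_congr
            (f := fun i => (if i + 1 + 1 = 1 then a :: us 1 else us (i + 1 + 1)) ++ vs (i + 1 + 1))
            (g := fun i => us (i + 1 + 1) ++ vs (i + 1 + 1)) (fun i _ => by simp)]
        rw [hz, flatten_range_succ, h0]
        simp
      · intro i j h1 h2 h3
        by_cases hi : i = 1
        · subst hi
          have hj : j = 0 := by omega
          subst hj
          rw [h0]
          intro c hc; exact absurd hc (by simp)
        · simp only [if_neg hi]
          exact hcond i j h1 h2 h3
    · -- insert [a] as a new first u-block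
      refine ⟨m + 2, fun i => if i = 1 then [a] else us (i - 1),
        fun j => if j = 0 then [] else vs (j - 1), ?_, ?_, ?_, ?_, ?_, ?_⟩
      · intro i h1 h2
        by_cases hi : i = 1
        · simp [hi]
        · simp only [if_neg hi]
          exact hus (i - 1) (by omega) (by omega)
      · intro j h1 h2
        have hj : j ≠ 0 := by omega
        simp only [if_neg hj]
        rcases Nat.eq_zero_or_pos (j - 1) with hj1 | hj1
        · rw [hj1]; exact h0
        · exact hvs (j - 1) (by omega) (by omega)
      · rw [flatten_range_succ]
        simp only [Nat.zero_add, if_pos rfl]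
        rw [flatten_range_congr (f := fun i => if i + 1 + 1 = 1 then [a] else us (i + 1 + 1 - 1))
            (g := fun i => us (i + 1)) (fun i _ => by simp)]
        rw [hu]
        simp
      · rw [flatten_range_succ]
        simp only [if_pos rfl]
        rw [flatten_range_congr (f := fun j => if j + 1 = 0 then [] else vs (j + 1 - 1))
            (g := fun j => vs j) (fun j _ => by simp)]
        rw [hv]
        simp
      · rw [flatten_range_succ]
        simp only [if_pos rfl]
        rw [flatten_range_congr
            (f := fun i => (if i + 1 + 1 = 1 then [a] else us (i + 1 + 1 - 1)) ++
              (if i + 1 + 1 = 0 then [] else vs (i + 1 + 1 - 1)))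
            (g := fun i => us (i + 1) ++ vs (i + 1)) (fun i _ => by simp)]
        rw [hz]
        simp
      · intro i j h1 h2 h3
        by_cases hj : j = 0
        · subst hj
          simp only [if_pos rfl]
          intro c hc; exact absurd hc (by simp)
        · have hi : i ≠ 1 := by omega
          simp only [if_neg hj, if_neg hi]
          exact hcond (i - 1) (j - 1) (by omega) (by omega) (by omega)

/-! ### Scat ↔ rconc -/

lemma scat_of_rconc (hsym : Symmetric I) :
    ∀ u v z : List α, z ∈ rconc I u v → Scat I u z v := by
  have main : ∀ (N : ℕ) (u v z : List α), u.length + v.length ≤ N → z ∈ rconc I u v →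
      Scat I u z v := by
    intro N
    induction N with
    | zero =>
        intro u v z h1 h2
        match u, v with
        | [], v =>
            rw [mem_rconc_nil_left] at h2
            subst h2; exact ⟨0, scatN_nil _⟩
        | a :: u, v => simp at h1
    | succ N ih =>
        intro u v z h1 h2
        match u, v with
        | [], v =>
            rw [mem_rconc_nil_left] at h2
            subst h2; exact ⟨0, scatN_nil _⟩
        | a :: u, [] =>
            rw [mem_rconc_cons_nil] at h2
            subst h2; exact ⟨1, scatN_self _ (by simp)⟩
        | a :: u, b :: v =>
            rw [mem_rconc_cons_cons] at h2
            rcases h2 with ⟨w, hw, hz⟩ | ⟨hind, w, hw, rfl⟩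
            · subst hz
              obtain ⟨m, hm⟩ := ih u (b :: v) w (by simp at h1 ⊢; omega) hw
              exact scatN_consU a hm
            · obtain ⟨m, hm⟩ := ih (a :: u) v w (by simp at h1 ⊢; omega) hw
              exact ⟨m, scatN_consV (fun c hc => hsym (hind c hc b (by simp))) hm⟩
  exact fun u v z => main (u.length + v.length) u v z le_rfl

lemma rconc_of_scatN (hsym : Symmetric I) :
    ∀ (n : ℕ) (u z v : List α), ScatN I n u z v → z ∈ rconc I u v := by
  intro n
  induction n with
  | zero =>
      intro u z v h
      obtain ⟨us, vs, h1, h2, hu, hv, hz, h3⟩ := h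
      have hu0 : u = [] := by simpa using hu
      have hzv : z = v := by
        rw [hz, hv, flatten_range_succ]; simp
      rw [hu0, mem_rconc_nil_left]
      exact hzv
  | succ n ih =>
      intro u z v h
      obtain ⟨us, vs, hus, hvs, hu, hv, hz, hcond⟩ := h
      have hrest : ScatN I n (((List.range n).map (fun i => us (i + 2))).flatten)
          (vs 1 ++ ((List.range n).map (fun i => us (i + 2) ++ vs (i + 2))).flatten)
          (((List.range (n + 1)).map (fun j => vs (j + 1))).flatten) := by
        refine ⟨fun i => us (i + 1), fun j => vs (j + 1), ?_, ?_, rfl, rfl, rfl, ?_⟩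
        · intro i h1 h2; exact hus (i + 1) (by omega) (by omega)
        · intro j h1 h2; exact hvs (j + 1) (by omega) (by omega)
        · intro i j h1 h2 h3
          exact hcond (i + 1) (j + 1) (by omega) (by omega) (by omega)
      have hmem := ih _ _ _ hrest
      have step1 := rconc_appendU (us 1) hmem
      have hfree : ∀ c ∈ vs 0,
          WIndep I (us 1 ++ ((List.range n).map (fun i => us (i + 2))).flatten) [c] := by
        intro c hc d hd e he
        have hd2 : ∃ i, 1 ≤ i ∧ i ≤ n + 1 ∧ d ∈ us i := by
          rcases List.mem_append.mp hd with hd1 | hd1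
          · exact ⟨1, le_refl 1, by omega, hd1⟩
          · rw [List.mem_flatten] at hd1
            obtain ⟨l, hl, hdl⟩ := hd1
            rw [List.mem_map] at hl
            obtain ⟨i, hi, rfl⟩ := hl
            have hi2 := List.mem_range.mp hi
            exact ⟨i + 2, by omega, by omega, hdl⟩
        obtain ⟨i, hi1, hi2, hdi⟩ := hd2
        have hcd := hcond i 0 hi1 hi2 (by omega) c hc d hdi
        rcases List.mem_singleton.mp he with rfl
        exact hsym hcd
      have step2 := rconc_prependV step1 hfree
      have hu2 : u = us 1 ++ ((List.range n).map (fun i => us (i + 2))).flatten := by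
        rw [hu, flatten_range_succ]
      have hv2 : v = vs 0 ++ ((List.range (n + 1)).map (fun j => vs (j + 1))).flatten := by
        rw [hv, flatten_range_succ]
      have hz2 : z = vs 0 ++
          (us 1 ++ (vs 1 ++ ((List.range n).map (fun i => us (i + 2) ++ vs (i + 2))).flatten)) := by
        rw [hz, flatten_range_succ]
        simp [List.append_assoc]
      rw [hu2, hv2, hz2]
      exact step2

/-! ### swap absorption -/

lemma rconc_swap (hsym : Symmetric I) {a b : α} (hab : I a b) :
    ∀ (x u v y : List α), (x ++ a :: b :: y) ∈ rconc I u v →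
      ∃ u₂ v₂, TrEq I u u₂ ∧ TrEq I v₂ v ∧ (x ++ b :: a :: y) ∈ rconc I u₂ v₂ := by
  intro x
  induction x with
  | nil =>
      intro u v y h
      simp only [List.nil_append] at h ⊢
      match u, v with
      | [], v =>
          rw [mem_rconc_nil_left] at h
          refine ⟨[], b :: a :: y, TrEq.refl _, ?_, by rw [mem_rconc_nil_left]⟩
          rw [← h]
          simpa using TrEq.swap (I := I) [] y (hsym hab)
      | c :: u1, [] =>
          rw [mem_rconc_cons_nil] at h
          refine ⟨b :: a :: y, [], ?_, TrEq.refl _, ?_⟩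
          · rw [← h]
            simpa using TrEq.swap (I := I) [] y hab
          · exact rconc_self_right _
      | c :: u1, d :: v1 =>
          rw [mem_rconc_cons_cons] at h
          rcases h with ⟨w, hw, hz⟩ | ⟨hind, w, hw, hz⟩
          · -- hz : c :: w = a :: b :: y ; so c = a, w = b :: y
            obtain ⟨h1, h2⟩ := List.cons_eq_cons.mp hz
            subst h2
            have h1s := h1.symm; subst h1s
            -- now the head of u is a, hw : b :: y ∈ rconc I u1 (d :: v1)
            match u1, hw with
            | [], hw =>
                rw [mem_rconc_nil_left] at hw
                refine ⟨[a], d :: v1, TrEq.refl _, TrEq.refl _, ?_⟩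
                rw [← hw]
                rw [mem_rconc_cons_cons]
                refine Or.inr ⟨?_, a :: y, ?_, rfl⟩
                · intro p hp q hq
                  rw [List.mem_singleton.mp hp, List.mem_singleton.mp hq]
                  exact hab
                · exact rconc_consU a (by rw [mem_rconc_nil_left])
            | c2 :: u2, hw =>
                rw [mem_rconc_cons_cons] at hw
                rcases hw with ⟨w2, hw2, hz2⟩ | ⟨hind2, w2, hw2, hz2⟩
                · -- hz2 : c2 :: w2 = b :: y ; c2 = b, w2 = y
                  obtain ⟨h1, h2⟩ := List.cons_eq_cons.mp hz2
                  have h2s := h2.symm; subst h2s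
                  have h1s := h1.symm; subst h1s
                  refine ⟨b :: a :: u2, d :: v1, ?_, TrEq.refl _, ?_⟩
                  · simpa using TrEq.swap (I := I) [] u2 hab
                  · exact rconc_consU b (rconc_consU a hw2)
                · -- hz2 : b :: y = d :: w2 ; d = b, w2 = y
                  obtain ⟨h1, h2⟩ := List.cons_eq_cons.mp hz2
                  subst h1
                  subst h2
                  refine ⟨a :: c2 :: u2, b :: v1, TrEq.refl _, TrEq.refl _, ?_⟩
                  rw [mem_rconc_cons_cons]
                  refine Or.inr ⟨?_, a :: y, rconc_consU a hw2, rfl⟩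
                  intro p hp q hq
                  rw [List.mem_singleton.mp hq]
                  rcases List.mem_cons.mp hp with hpa | hp2
                  · rw [hpa]; exact hab
                  · exact hind2 p hp2 b (by simp)
          · -- hz : a :: b :: y = d :: w ; d = a, w = b :: y
            obtain ⟨h1, h2⟩ := List.cons_eq_cons.mp hz
            subst h1
            have h2s := h2.symm; subst h2s
            -- hw : b :: y ∈ rconc I (c :: u1) v1, hind : WIndep I (c :: u1) [a]
            match v1, hw with
            | [], hw =>
                rw [mem_rconc_cons_nil] at hw
                refine ⟨c :: u1, [a], TrEq.refl _, TrEq.refl _, ?_⟩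
                rw [← hw]
                refine rconc_consU b (rconc_consV ?_ (rconc_self_right y))
                intro p hp q hq
                rw [List.mem_singleton.mp hq]
                exact hind p (by rw [← hw]; exact List.mem_cons_of_mem b hp) a (by simp)
            | e :: v2, hw =>
                rw [mem_rconc_cons_cons] at hw
                rcases hw with ⟨w2, hw2, hz2⟩ | ⟨hind2, w2, hw2, hz2⟩
                · -- hz2 : c :: w2 = b :: y ; c = b, w2 = y
                  obtain ⟨h1, h2⟩ := List.cons_eq_cons.mp hz2
                  have h2s := h2.symm; subst h2s
                  have h1s := h1.symm; subst h1s
                  refine ⟨b :: u1, a :: e :: v2, TrEq.refl _, TrEq.refl _, ?_⟩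
                  refine rconc_consU b ?_
                  cases u1 with
                  | nil =>
                      rw [mem_rconc_nil_left] at hw2 ⊢
                      rw [hw2]
                  | cons f u3 =>
                      rw [mem_rconc_cons_cons]
                      refine Or.inr ⟨?_, y, hw2, rfl⟩
                      intro p hp q hq
                      rw [List.mem_singleton.mp hq]
                      exact hind p (List.mem_cons_of_mem b hp) a (by simp)
                · -- hz2 : b :: y = e :: w2 ; e = b, w2 = y
                  obtain ⟨h1, h2⟩ := List.cons_eq_cons.mp hz2
                  subst h1
                  subst h2
                  refine ⟨c :: u1, b :: a :: v2, TrEq.refl _, ?_, ?_⟩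
                  · simpa using TrEq.swap (I := I) [] v2 (hsym hab)
                  · refine rconc_consV ?_ (rconc_consV ?_ hw2)
                    · intro p hp q hq
                      rw [List.mem_singleton.mp hq]
                      exact hind2 p hp b (by simp)
                    · intro p hp q hq
                      rw [List.mem_singleton.mp hq]
                      exact hind p hp a (by simp)
  | cons c x1 ih =>
      intro u v y h
      match u, v with
      | [], v =>
          rw [mem_rconc_nil_left] at h
          refine ⟨[], (c :: x1) ++ b :: a :: y, TrEq.refl _, ?_, by rw [mem_rconc_nil_left]⟩
          rw [← h]
          simpa [List.append_assoc] using TrEq.swap (I := I) (c :: x1) y (hsym hab)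
      | e :: u1, [] =>
          rw [mem_rconc_cons_nil] at h
          refine ⟨(c :: x1) ++ b :: a :: y, [], ?_, TrEq.refl _, rconc_self_right _⟩
          rw [← h]
          simpa [List.append_assoc] using TrEq.swap (I := I) (c :: x1) y hab
      | e :: u1, f :: v1 =>
          rw [show (c :: x1) ++ a :: b :: y = c :: (x1 ++ a :: b :: y) from rfl] at h
          rw [mem_rconc_cons_cons] at h
          rcases h with ⟨w, hw, hz⟩ | ⟨hind, w, hw, hz⟩
          · -- hz : e :: w = c :: (x1 ++ a :: b :: y) ; e = c, w = x1 ++ ...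
            obtain ⟨h1, h2⟩ := List.cons_eq_cons.mp hz
            subst h2
            have h1s := h1.symm; subst h1s
            obtain ⟨u₂, v₂, g1, g2, g3⟩ := ih u1 (f :: v1) y hw
            exact ⟨c :: u₂, v₂, treq_cons g1 c, g2, rconc_consU c g3⟩
          · -- hz : c :: (x1 ++ a :: b :: y) = f :: w ; f = c, w = x1 ++ ...
            obtain ⟨h1, h2⟩ := List.cons_eq_cons.mp hz
            subst h1
            have h2s := h2.symm; subst h2s
            obtain ⟨u₂, v₂, g1, g2, g3⟩ := ih (e :: u1) v1 y hw
            refine ⟨u₂, c :: v₂, g1, treq_cons g2 c, ?_⟩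
            refine rconc_consV ?_ g3
            intro p hp q hq
            rw [List.mem_singleton.mp hq]
            exact hind p ((treq_mem g1 p).mpr hp) c (by simp)

/-! ### closure under TrEq -/

lemma treq_closed (hsym : Symmetric I) {u v w z : List α} (h : TrEq I w z) :
    (∃ u' v', TrEq I u u' ∧ w ∈ rconc I u' v' ∧ TrEq I v' v) ↔
    (∃ u' v', TrEq I u u' ∧ z ∈ rconc I u' v' ∧ TrEq I v' v) := by
  induction h with
  | @swap x y a b hab =>
      constructor
      · rintro ⟨u', v', h1, h2, h3⟩
        obtain ⟨u₂, v₂, g1, g2, g3⟩ := rconc_swap hsym hab x u' v' y (by simpa using h2)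
        exact ⟨u₂, v₂, h1.trans g1, by simpa using g3, g2.trans h3⟩
      · rintro ⟨u', v', h1, h2, h3⟩
        obtain ⟨u₂, v₂, g1, g2, g3⟩ := rconc_swap hsym (hsym hab) x u' v' y (by simpa using h2)
        exact ⟨u₂, v₂, h1.trans g1, by simpa using g3, g2.trans h3⟩
  | refl w => exact Iff.rfl
  | symm _ ih => exact ih.symm
  | trans _ _ ih1 ih2 => exact ih1.trans ih2

end Stmt0Aux

/-- For all words u, v, z over Σ: u ++ v ∼ z iff u ∼⊲ z ⊳∼ v. -/
theorem stmt0 {α : Type u} [Fintype α] (I : α → α → Prop)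
    (hirr : Irreflexive I) (hsym : Symmetric I) (u v z : List α) :
    TrEq I (u ++ v) z ↔ EqScatEq I u z v := by
  constructor
  · intro h
    have base : ∃ u' v', TrEq I u u' ∧ (u ++ v) ∈ rconc I u' v' ∧ TrEq I v' v :=
      ⟨u, v, TrEq.refl _, rconc_self_append u v, TrEq.refl _⟩
    obtain ⟨u', v', h1, h2, h3⟩ := (treq_closed hsym h).mp base
    exact ⟨u', v', h1, scat_of_rconc hsym u' v' z h2, h3⟩
  · rintro ⟨u', v', h1, ⟨n, hn⟩, h3⟩
    have hmem : z ∈ rconc I u' v' := rconc_of_scatN hsym n u' z v' hn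
    have h4 : TrEq I (u' ++ v') z := treq_of_rconc u' v' z hmem
    exact ((treq_append_right h1 v).trans ((treq_append_left h3.symm u').trans h4))
end

section
/- For all words u, v, z over Σ: z ∈ u ·^I v if and only if u ⊲ z ⊳ v. -/
open RegularExpression
open scoped Classical

universe u

variable {α : Type u}

namespace Stmt1Aux

variable {α : Type u}

def blk (f : ℕ → List α) (n : ℕ) : List α := ((List.range n).map f).flatten

theorem blk_zero (f : ℕ → List α) : blk f 0 = [] := rfl

theorem blk_succ (f : ℕ → List α) (n : ℕ) :
    blk f (n + 1) = f 0 ++ blk (fun i => f (i + 1)) n := by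
  simp [blk, List.range_succ_eq_map, List.map_map, Function.comp_def]

theorem mem_blk_iff {f : ℕ → List α} {n : ℕ} {x : α} :
    x ∈ blk f n ↔ ∃ i < n, x ∈ f i := by
  simp [blk, List.mem_flatten, List.mem_map]

theorem scatN_def (I : α → α → Prop) (n : ℕ) (u z v : List α) :
    ScatN I n u z v ↔
      ∃ us vs : ℕ → List α,
        (∀ i, 1 ≤ i → i ≤ n → us i ≠ []) ∧
        (∀ j, 1 ≤ j → j ≤ n - 1 → vs j ≠ []) ∧
        u = blk (fun i => us (i + 1)) n ∧
        v = blk vs (n + 1) ∧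
        z = vs 0 ++ blk (fun i => us (i + 1) ++ vs (i + 1)) n ∧
        (∀ i j, 1 ≤ i → i ≤ n → j < i → WIndep I (vs j) (us i)) := Iff.rfl

/-- Letters of `u` are in some block. -/
theorem mem_of_scat_u {n : ℕ} {us : ℕ → List α} {x : α}
    (hx : x ∈ blk (fun i => us (i + 1)) n) : ∃ i, 1 ≤ i ∧ i ≤ n ∧ x ∈ us i := by
  obtain ⟨i, hi, hxi⟩ := mem_blk_iff.mp hx
  exact ⟨i + 1, by omega, by omega, hxi⟩

theorem scat_nil (I : α → α → Prop) (v : List α) : Scat I [] v v := by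
  refine ⟨0, (scatN_def ..).mpr ⟨fun _ => [], fun _ => v, ?_, ?_, rfl, ?_, ?_, ?_⟩⟩
  · intro i h1 h2; omega
  · intro j h1 h2; omega
  · simp [blk_succ, blk_zero]
  · simp [blk_zero]
  · intro i j h1 h2; omega

theorem scat_consV {I : α → α → Prop} {u z v : List α} {b : α}
    (hb : ∀ x ∈ u, I b x) (h : Scat I u z v) : Scat I u (b :: z) (b :: v) := by
  obtain ⟨n, h⟩ := h
  rw [scatN_def] at h
  obtain ⟨us, vs, hus, hvs, hu, hv, hz, hind⟩ := h
  refine ⟨n, (scatN_def ..).mpr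
    ⟨us, fun j => match j with | 0 => b :: vs 0 | j + 1 => vs (j + 1),
      hus, ?_, hu, ?_, ?_, ?_⟩⟩
  · intro j h1 h2
    match j, h2 with
    | (k + 1), h2 => exact hvs (k + 1) (by omega) h2
  · rw [blk_succ]
    show b :: v = (b :: vs 0) ++ blk (fun j => vs (j + 1)) n
    rw [hv, blk_succ]; rfl
  · show b :: z = (b :: vs 0) ++ blk (fun i => us (i + 1) ++ vs (i + 1)) n
    rw [hz]; rfl
  · intro i j h1 h2 hj
    match j with
    | 0 =>
      intro x hx y hy
      rcases List.mem_cons.mp hx with rfl | hx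
      · exact hb y (hu ▸ mem_blk_iff.mpr ⟨i - 1, by omega, by
          have : i - 1 + 1 = i := by omega
          rw [this]; exact hy⟩)
      · exact hind i 0 h1 h2 hj x hx y hy
    | (k + 1) => exact hind i (k + 1) h1 h2 hj

theorem scat_consU {I : α → α → Prop} {u z v : List α} (a : α)
    (h : Scat I u z v) : Scat I (a :: u) (a :: z) v := by
  obtain ⟨n, h⟩ := h
  rw [scatN_def] at h
  obtain ⟨us, vs, hus, hvs, hu, hv, hz, hind⟩ := h
  by_cases hcase : n = 0 ∨ vs 0 ≠ []
  · -- insert a new block [a] at the front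
    refine ⟨n + 1, (scatN_def ..).mpr
      ⟨fun i => match i with | 0 => [] | 1 => [a] | i + 2 => us (i + 1),
       fun j => match j with | 0 => [] | j + 1 => vs j,
       ?_, ?_, ?_, ?_, ?_, ?_⟩⟩
    · intro i h1 h2
      match i with
      | 1 => simp
      | (k + 2) => exact hus (k + 1) (by omega) (by omega)
    · intro j h1 h2
      match j with
      | (k + 1) =>
        show vs k ≠ []
        match k with
        | 0 =>
          rcases hcase with h0 | h0
          · omega
          · exact h0
        | (l + 1) => exact hvs (l + 1) (by omega) (by omega)
    · rw [blk_succ]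
      show a :: u = [a] ++ blk (fun i => us (i + 1)) n
      rw [hu]; rfl
    · rw [blk_succ]
      show v = [] ++ blk vs (n + 1)
      rw [hv]; rfl
    · rw [blk_succ]
      show a :: z = [] ++ (([a] ++ vs 0) ++ blk (fun i => us (i + 1) ++ vs (i + 1)) n)
      rw [hz]; simp
    · intro i j h1 h2 hj
      match i with
      | 1 =>
        match j with
        | 0 => intro x hx; cases hx
      | (k + 2) =>
        match j with
        | 0 => intro x hx; cases hx
        | (l + 1) =>
          show WIndep I (vs l) (us (k + 1))
          exact hind (k + 1) l (by omega) (by omega) (by omega)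
  · -- merge a into the first block
    push_neg at hcase
    obtain ⟨hn, h0⟩ := hcase
    obtain ⟨m, rfl⟩ := Nat.exists_eq_succ_of_ne_zero hn
    refine ⟨m + 1, (scatN_def ..).mpr
      ⟨fun i => match i with | 0 => [] | 1 => a :: us 1 | i + 2 => us (i + 2),
       vs, ?_, hvs, ?_, hv, ?_, ?_⟩⟩
    · intro i h1 h2
      match i with
      | 1 => simp
      | (k + 2) => exact hus (k + 2) (by omega) h2
    · rw [blk_succ]
      show a :: u = (a :: us 1) ++ blk (fun i => us (i + 2)) m
      rw [hu, blk_succ]; rfl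
    · rw [blk_succ]
      show a :: z = vs 0 ++ ((a :: us 1 ++ vs 1) ++ blk (fun i => us (i + 2) ++ vs (i + 2)) m)
      rw [hz, blk_succ, h0]; simp
    · intro i j h1 h2 hj
      match i with
      | 1 =>
        match j with
        | 0 =>
          show WIndep I (vs 0) (a :: us 1)
          rw [h0]; intro x hx; cases hx
      | (k + 2) =>
        show WIndep I (vs j) (us (k + 2))
        exact hind (k + 2) j (by omega) h2 hj

/-- Inductive characterization of scattering. -/
inductive ScatInd (I : α → α → Prop) : List α → List α → List α → Prop
  | base (v : List α) : ScatInd I [] v v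
  | consU {u z v : List α} (a : α) : ScatInd I u z v → ScatInd I (a :: u) (a :: z) v
  | consV {u z v : List α} (b : α) : (∀ x ∈ u, I b x) → ScatInd I u z v →
      ScatInd I u (b :: z) (b :: v)

theorem scat_of_scatInd {I : α → α → Prop} {u z v : List α}
    (h : ScatInd I u z v) : Scat I u z v := by
  induction h with
  | base v => exact scat_nil I v
  | consU a _ ih => exact scat_consU a ih
  | consV b hb _ ih => exact scat_consV hb ih

theorem scatN_zero {I : α → α → Prop} {u z v : List α}
    (h : ScatN I 0 u z v) : u = [] ∧ z = v := by
  rw [scatN_def] at h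
  obtain ⟨us, vs, _, _, hu, hv, hz, _⟩ := h
  rw [blk_zero] at hu hz
  rw [blk_succ, blk_zero] at hv
  simp at hv hz
  exact ⟨hu, by rw [hz, hv]⟩

theorem scatInd_of_scat {I : α → α → Prop} :
    ∀ z u v : List α, Scat I u z v → ScatInd I u z v := by
  intro z
  induction z with
  | nil =>
    intro u v h
    obtain ⟨n, h⟩ := h
    match n with
    | 0 =>
      obtain ⟨rfl, rfl⟩ := scatN_zero h
      exact .base []
    | (m + 1) =>
      rw [scatN_def] at h
      obtain ⟨us, vs, hus, hvs, hu, hv, hz, hind⟩ := h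
      rw [blk_succ] at hz
      exfalso
      have h1 : us 1 ≠ [] := hus 1 le_rfl (by omega)
      simp [List.append_eq_nil_iff] at hz
      exact h1 hz.2.1
  | cons c z' ih =>
    intro u v h
    obtain ⟨n, h⟩ := h
    match n with
    | 0 =>
      obtain ⟨rfl, rfl⟩ := scatN_zero h
      exact .base _
    | (m + 1) =>
      rw [scatN_def] at h
      obtain ⟨us, vs, hus, hvs, hu, hv, hz, hind⟩ := h
      rcases h0 : vs 0 with _ | ⟨b, t⟩
      · -- vs 0 = [] : z starts with the first letter of us 1
        rcases hu1 : us 1 with _ | ⟨a, t⟩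
        · exact absurd hu1 (hus 1 le_rfl (by omega))
        rw [h0, blk_succ, hu1, List.nil_append] at hz
        -- hz : c :: z' = ((a :: t) ++ vs 1) ++ blk ... m
        rw [List.cons_append, List.cons_append] at hz
        injection hz with hc hz'
        subst hc
        -- hz' : z' = (t ++ vs 1) ++ blk (fun i => us (i+2) ++ vs (i+2)) m
        rw [blk_succ, hu1] at hu
        -- hu : u = (c :: t) ++ blk (fun i => us (i+2)) m
        by_cases ht : t = []
        · -- us 1 = [c] : drop the first block
          subst ht
          have h' : Scat I (blk (fun i => us (i + 2)) m)
              (vs 1 ++ blk (fun i => us (i + 2) ++ vs (i + 2)) m) v := by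
            refine ⟨m, (scatN_def ..).mpr
              ⟨fun i => us (i + 1), fun j => vs (j + 1), ?_, ?_, rfl, ?_, rfl, ?_⟩⟩
            · intro i h1 h2; exact hus (i + 1) (by omega) (by omega)
            · intro j h1 h2; exact hvs (j + 1) (by omega) (by omega)
            · rw [hv, blk_succ, h0, List.nil_append]
            · intro i j h1 h2 hj
              exact hind (i + 1) (j + 1) (by omega) (by omega) (by omega)
          have hz2 : z' = vs 1 ++ blk (fun i => us (i + 2) ++ vs (i + 2)) m := by
            rw [hz', List.nil_append]
          rw [← hz2] at h'
          have hg := ScatInd.consU (I := I) c (ih _ _ h')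
          rw [hu, List.cons_append, List.nil_append]
          exact hg
        · -- t ≠ [] : shrink the first block
          have h' : Scat I (t ++ blk (fun i => us (i + 2)) m)
              ((t ++ vs 1) ++ blk (fun i => us (i + 2) ++ vs (i + 2)) m) v := by
            refine ⟨m + 1, (scatN_def ..).mpr
              ⟨fun i => match i with | 0 => [] | 1 => t | i + 2 => us (i + 2),
               vs, ?_, hvs, ?_, hv, ?_, ?_⟩⟩
            · intro i h1 h2
              match i with
              | 1 => exact ht
              | (k + 2) => exact hus (k + 2) (by omega) h2
            · conv_rhs => rw [blk_succ]
            · conv_rhs => rw [blk_succ]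
              rw [h0, List.nil_append, List.append_assoc]
            · intro i j h1 h2 hj
              match i with
              | 1 =>
                match j with
                | 0 => show WIndep I (vs 0) t; rw [h0]; intro x hx; cases hx
              | (k + 2) =>
                show WIndep I (vs j) (us (k + 2))
                exact hind (k + 2) j (by omega) h2 hj
          rw [← hz'] at h'
          have hg := ScatInd.consU (I := I) c (ih _ _ h')
          rw [hu, List.cons_append]
          exact hg
      · -- vs 0 = b :: t : z starts with b
        rw [h0, List.cons_append] at hz
        injection hz with hc hz'
        subst hc
        -- hz' : z' = t ++ blk (fun i => us (i+1) ++ vs (i+1)) (m+1)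
        have h' : Scat I u (t ++ blk (fun i => us (i + 1) ++ vs (i + 1)) (m + 1))
            (t ++ blk (fun j => vs (j + 1)) (m + 1)) := by
          refine ⟨m + 1, (scatN_def ..).mpr
            ⟨us, fun j => match j with | 0 => t | j + 1 => vs (j + 1),
             hus, ?_, hu, ?_, rfl, ?_⟩⟩
          · intro j h1 h2
            match j, h2 with
            | (k + 1), h2 => exact hvs (k + 1) (by omega) h2
          · conv_rhs => rw [blk_succ]
          · intro i j h1 h2 hj
            match j with
            | 0 =>
              intro x hx y hy
              exact hind i 0 h1 h2 (by omega) x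
                (by rw [h0]; exact List.mem_cons_of_mem _ hx) y hy
            | (k + 1) => exact hind i (k + 1) h1 h2 hj
        rw [← hz'] at h'
        have hb : ∀ x ∈ u, I c x := by
          intro x hx
          rw [hu] at hx
          obtain ⟨i, h1, h2, hxi⟩ := mem_of_scat_u hx
          exact hind i 0 h1 h2 (by omega) c (by rw [h0]; exact List.mem_cons_self) x hxi
        have hg := ScatInd.consV (I := I) c hb (ih _ _ h')
        rw [hv, blk_succ, h0, List.cons_append]
        exact hg

theorem rconc_cons_left {I : α → α → Prop} {u v z : List α} (a : α)
    (h : z ∈ rconc I u v) : a :: z ∈ rconc I (a :: u) v := by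
  match v with
  | [] =>
    match u with
    | [] => simp [rconc] at h ⊢; exact h
    | c :: u' => simp [rconc] at h ⊢; exact h
  | b :: v' =>
    rw [rconc]
    exact Or.inl ⟨z, h, rfl⟩

theorem mem_rconc_of_scatInd {I : α → α → Prop} (hsym : Symmetric I)
    {u z v : List α} (h : ScatInd I u z v) : z ∈ rconc I u v := by
  induction h with
  | base v => simp [rconc]
  | consU a _ ih => exact rconc_cons_left a ih
  | @consV u' z' v' b hb h ih =>
    match u' with
    | [] =>
      simp [rconc] at ih ⊢
      exact ih
    | a :: u'' =>
      rw [rconc]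
      refine Or.inr ⟨?_, z', ih, rfl⟩
      intro x hx y hy
      rw [List.mem_singleton] at hy
      subst hy
      exact hsym (hb x hx)

theorem scatInd_of_mem_rconc {I : α → α → Prop} (hsym : Symmetric I) :
    ∀ (N : ℕ) (u v z : List α), u.length + v.length ≤ N → z ∈ rconc I u v → ScatInd I u z v := by
  intro N
  induction N with
  | zero =>
    intro u v z hlen h
    match u, v with
    | [], v =>
      simp [rconc] at h
      subst h
      exact .base _
    | a :: u', v => simp at hlen
  | succ N ih =>
    intro u v z hlen h
    match u, v with
    | [], v =>
      simp [rconc] at h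
      subst h
      exact .base _
    | a :: u', [] =>
      simp [rconc] at h
      subst h
      clear hlen
      induction u' with
      | nil => exact .consU a (.base [])
      | cons c u'' ih' =>
        exact .consU a (by
          cases ih' with
          | consU _ h' => exact .consU c h'
          )
    | a :: u', b :: v' =>
      rw [rconc] at h
      rcases h with ⟨w, hw, rfl⟩ | ⟨hi, w, hw, rfl⟩
      · exact .consU a (ih u' (b :: v') w (by simp at hlen ⊢; omega) hw)
      · refine .consV b ?_ (ih (a :: u') v' w (by simp at hlen ⊢; omega) hw)
        intro x hx
        exact hsym (hi x hx b (List.mem_singleton_self b))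

end Stmt1Aux

/-- z ∈ u ·^I v iff u ⊲ z ⊳ v. -/
theorem stmt1 {α : Type u} [Fintype α] (I : α → α → Prop)
    (hirr : Irreflexive I) (hsym : Symmetric I) (u v z : List α) :
    z ∈ rconc I u v ↔ Scat I u z v := by
  constructor
  · intro h
    exact Stmt1Aux.scat_of_scatInd
      (Stmt1Aux.scatInd_of_mem_rconc hsym (u.length + v.length) u v z le_rfl h)
  · intro h
    exact Stmt1Aux.mem_rconc_of_scatInd hsym (Stmt1Aux.scatInd_of_scat z u v h)
end

section
/- For all languages L and L′ over Σ: [L · L′] = [L] ·^I [L′], i.e., the trace closure of the concatenation of two languages equals the reordering concatenation of their trace closures. -/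
open RegularExpression
open scoped Classical

universe u

variable {α : Type u}

section Aux

variable {I : α → α → Prop}

/-- Inductive characterization of membership in `rconc`. -/
inductive Sh (I : α → α → Prop) : List α → List α → List α → Prop
  | nil (v : List α) : Sh I [] v v
  | consL {u v z : List α} (a : α) : Sh I u v z → Sh I (a :: u) v (a :: z)
  | consR {u v z : List α} {b : α} : WIndep I u [b] → Sh I u v z → Sh I u (b :: v) (b :: z)

theorem Sh.nil_right : ∀ (u : List α), Sh I u [] u
  | [] => Sh.nil []
  | a :: u => Sh.consL a (Sh.nil_right u)

theorem Sh_nil_left_eq {v z : List α} (h : Sh I [] v z) : z = v := by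
  generalize hu : ([] : List α) = u0 at h
  induction h with
  | nil v => rfl
  | consL a _ _ => exact absurd hu (by simp)
  | consR _ _ ih => rw [ih hu]

theorem Sh_nil_right_eq {u z : List α} (h : Sh I u [] z) : z = u := by
  generalize hv : ([] : List α) = v at h
  induction h with
  | nil v => exact hv.symm
  | consL a _ ih => rw [ih hv]
  | consR _ _ _ => exact absurd hv (by simp)

theorem sh_of_rconc : ∀ (u v z : List α), z ∈ rconc I u v → Sh I u v z := by
  intro u
  induction u with
  | nil =>
    intro v z hz
    simp only [rconc, Set.mem_singleton_iff] at hz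
    subst hz; exact Sh.nil _
  | cons a u ihu =>
    intro v
    induction v with
    | nil =>
      intro z hz
      simp only [rconc, Set.mem_singleton_iff] at hz
      subst hz; exact Sh.nil_right _
    | cons b v ihv =>
      intro z hz
      simp only [rconc, Set.mem_union, Set.mem_image, Set.mem_setOf_eq] at hz
      rcases hz with ⟨w, hw, rfl⟩ | ⟨hind, w, hw, rfl⟩
      · exact Sh.consL a (ihu _ _ hw)
      · exact Sh.consR hind (ihv _ hw)

theorem rconc_of_sh {u v z : List α} (h : Sh I u v z) : z ∈ rconc I u v := by
  induction h with
  | nil v => simp [rconc]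
  | @consL u v z a h ih =>
    cases v with
    | nil =>
      have hz := Sh_nil_right_eq h
      subst hz
      simp [rconc]
    | cons b v' =>
      simp only [rconc, Set.mem_union, Set.mem_image]
      exact Or.inl ⟨z, ih, rfl⟩
  | @consR u v z b hw h ih =>
    cases u with
    | nil =>
      have := Sh_nil_left_eq h
      subst this
      simp [rconc]
    | cons a u' =>
      simp only [rconc, Set.mem_union, Set.mem_setOf_eq]
      exact Or.inr ⟨hw, z, ih, rfl⟩

theorem Sh.self : ∀ (u v : List α), Sh I u v (u ++ v)
  | [], v => Sh.nil v
  | a :: u, v => Sh.consL a (Sh.self u v)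

theorem TrEq.append_left {u v : List α} (w : List α) (h : TrEq I u v) :
    TrEq I (w ++ u) (w ++ v) := by
  induction h with
  | swap x y hab => simpa using TrEq.swap (I := I) (w ++ x) y hab
  | refl u => exact TrEq.refl _
  | symm _ ih => exact ih.symm
  | trans _ _ ih1 ih2 => exact ih1.trans ih2

theorem TrEq.append_right {u v : List α} (w : List α) (h : TrEq I u v) :
    TrEq I (u ++ w) (v ++ w) := by
  induction h with
  | swap x y hab => simpa using TrEq.swap (I := I) x (y ++ w) hab
  | refl u => exact TrEq.refl _
  | symm _ ih => exact ih.symm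
  | trans _ _ ih1 ih2 => exact ih1.trans ih2

theorem TrEq.cons {u v : List α} (a : α) (h : TrEq I u v) :
    TrEq I (a :: u) (a :: v) :=
  h.append_left [a]

theorem TrEq.perm {u v : List α} (h : TrEq I u v) : u.Perm v := by
  induction h with
  | swap x y hab =>
    rename_i a b
    exact (List.Perm.append_left x (List.Perm.swap b a [])).append_right y
  | refl u => exact List.Perm.refl u
  | symm _ ih => exact ih.symm
  | trans _ _ ih1 ih2 => exact ih1.trans ih2

theorem treq_move (hsym : Symmetric I) {b : α} :
    ∀ (u : List α) (y : List α), WIndep I u [b] → TrEq I (b :: (u ++ y)) (u ++ b :: y) := by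
  intro u
  induction u with
  | nil => intro y _; exact TrEq.refl _
  | cons a u ih =>
    intro y hw
    have h1 : TrEq I (b :: a :: (u ++ y)) (a :: b :: (u ++ y)) := by
      have := TrEq.swap (I := I) [] (u ++ y)
        (hsym (hw a (by simp) b (by simp)))
      simpa using this
    have h2 : TrEq I (a :: (b :: (u ++ y))) (a :: (u ++ b :: y)) :=
      TrEq.cons a (ih y (fun x hx c hc => hw x (by simp [hx]) c hc))
    simpa using h1.trans h2

theorem sh_treq (hsym : Symmetric I) {u v z : List α} (h : Sh I u v z) :
    TrEq I z (u ++ v) := by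
  induction h with
  | nil v => exact TrEq.refl _
  | consL a _ ih => exact TrEq.cons a ih
  | @consR u v z b hw _ ih =>
    exact (TrEq.cons b ih).trans (treq_move hsym u v hw)

theorem windep_of_perm {u u' : List α} {c : α} (hp : u'.Perm u) (hw : WIndep I u [c]) :
    WIndep I u' [c] :=
  fun x hx d hd => hw x (hp.mem_iff.mp hx) d hd

/-- Inversion for Sh with a cons target. -/
theorem sh_cons_inv {u v z : List α} {c : α} (h : Sh I u v (c :: z)) :
    (∃ u₀, u = c :: u₀ ∧ Sh I u₀ v z) ∨
    (∃ v₀, v = c :: v₀ ∧ WIndep I u [c] ∧ Sh I u v₀ z) ∨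
    (u = [] ∧ v = c :: z) := by
  cases h with
  | nil => exact Or.inr (Or.inr ⟨rfl, rfl⟩)
  | consL a h => exact Or.inl ⟨_, rfl, h⟩
  | consR hw h => exact Or.inr (Or.inl ⟨_, rfl, hw, h⟩)

theorem windep_cons {u : List α} {a b : α} (hab : I a b) (hw : WIndep I u [b]) :
    WIndep I (a :: u) [b] := by
  intro x hx c hc
  simp at hc; subst hc
  rcases List.mem_cons.mp hx with rfl | hx
  · exact hab
  · exact hw x hx _ (by simp)

theorem windep_single {a b : α} (hab : I a b) : WIndep I [a] [b] := by
  intro x hx c hc; simp at hx hc; subst hx; subst hc; exact hab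

theorem windep_tail {u : List α} {a b : α} (hw : WIndep I (a :: u) [b]) :
    WIndep I u [b] :=
  fun x hx c hc => hw x (List.mem_cons_of_mem a hx) c hc

/-- Single-swap lemma. -/
theorem sh_swap {a b : α} (hab : I a b) :
    ∀ (x : List α) {u v y : List α}, Sh I u v (x ++ [a, b] ++ y) →
      ∃ u' v', TrEq I u u' ∧ TrEq I v v' ∧ Sh I u' v' (x ++ [b, a] ++ y) := by
  intro x
  induction x with
  | nil =>
    intro u v y hsh
    simp only [List.nil_append, List.cons_append] at hsh ⊢
    rcases sh_cons_inv hsh with ⟨u₀, rfl, h0⟩ | ⟨v₀, rfl, hwa, h0⟩ | ⟨rfl, rfl⟩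
    · rcases sh_cons_inv h0 with ⟨u₁, rfl, h1⟩ | ⟨v₁, rfl, hw, h1⟩ | ⟨rfl, rfl⟩
      · refine ⟨b :: a :: u₁, v, ?_, TrEq.refl _, Sh.consL b (Sh.consL a h1)⟩
        simpa using TrEq.swap (I := I) [] u₁ hab
      · exact ⟨a :: u₀, b :: v₁, TrEq.refl _, TrEq.refl _,
          Sh.consR (windep_cons hab hw) (Sh.consL a h1)⟩
      · exact ⟨[a], b :: y, TrEq.refl _, TrEq.refl _,
          Sh.consR (windep_single hab) (Sh.consL a (Sh.nil y))⟩
    · rcases sh_cons_inv h0 with ⟨u₁, rfl, h1⟩ | ⟨v₁, rfl, hwb, h1⟩ | ⟨rfl, rfl⟩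
      · exact ⟨b :: u₁, a :: v₀, TrEq.refl _, TrEq.refl _,
          Sh.consL b (Sh.consR (windep_tail hwa) h1)⟩
      · refine ⟨u, b :: a :: v₁, TrEq.refl _, ?_, Sh.consR hwb (Sh.consR hwa h1)⟩
        simpa using TrEq.swap (I := I) [] v₁ hab
      · exact ⟨[], b :: a :: y, TrEq.refl _,
          by simpa using TrEq.swap (I := I) [] y hab, Sh.nil _⟩
    · exact ⟨[], b :: a :: y, TrEq.refl _,
        by simpa using TrEq.swap (I := I) [] y hab, Sh.nil _⟩
  | cons c x' ih =>
    intro u v y hsh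
    simp only [List.cons_append] at hsh ⊢
    rcases sh_cons_inv hsh with ⟨u₀, rfl, h0⟩ | ⟨v₀, rfl, hw, h0⟩ | ⟨rfl, rfl⟩
    · obtain ⟨u', v', h1, h2, h3⟩ := ih h0
      exact ⟨c :: u', v', TrEq.cons c h1, h2, Sh.consL c h3⟩
    · obtain ⟨u', v', h1, h2, h3⟩ := ih h0
      exact ⟨u', c :: v', h1, TrEq.cons c h2,
        Sh.consR (windep_of_perm h1.perm.symm hw) h3⟩
    · refine ⟨[], c :: (x' ++ [b, a] ++ y), TrEq.refl _, ?_, Sh.nil _⟩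
      have := TrEq.swap (I := I) (c :: x') y hab
      simpa using this

theorem R_invariant (hsym : Symmetric I) {u v z z' : List α} (h : TrEq I z z') :
    (∃ u' v', TrEq I u u' ∧ TrEq I v v' ∧ Sh I u' v' z) ↔
    (∃ u' v', TrEq I u u' ∧ TrEq I v v' ∧ Sh I u' v' z') := by
  induction h with
  | swap x y hab =>
    rename_i a b
    constructor
    · rintro ⟨u₁, v₁, h1, h2, h3⟩
      obtain ⟨u₂, v₂, g1, g2, g3⟩ := sh_swap hab x h3
      exact ⟨u₂, v₂, h1.trans g1, h2.trans g2, g3⟩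
    · rintro ⟨u₁, v₁, h1, h2, h3⟩
      obtain ⟨u₂, v₂, g1, g2, g3⟩ := sh_swap (hsym hab) x h3
      exact ⟨u₂, v₂, h1.trans g1, h2.trans g2, g3⟩
  | refl u => exact Iff.rfl
  | symm _ ih => exact ih.symm
  | trans _ _ ih1 ih2 => exact ih1.trans ih2

end Aux

/-- [L · L′] = [L] ·^I [L′]. -/
theorem stmt2 {α : Type u} [Fintype α] (I : α → α → Prop)
    (hirr : Irreflexive I) (hsym : Symmetric I) (L L' : Set (List α)) :
    TrClosure I {w | ∃ u ∈ L, ∃ v ∈ L', w = u ++ v} =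
      rconcL I (TrClosure I L) (TrClosure I L') := by
  ext w
  constructor
  · rintro ⟨z, ⟨u, hu, v, hv, rfl⟩, hw⟩
    have hR : ∃ u' v', TrEq I u u' ∧ TrEq I v v' ∧ Sh I u' v' w :=
      (R_invariant hsym hw).mpr ⟨u, v, TrEq.refl u, TrEq.refl v, Sh.self u v⟩
    obtain ⟨u', v', h1, h2, h3⟩ := hR
    exact ⟨u', ⟨u, hu, h1.symm⟩, v', ⟨v, hv, h2.symm⟩, rconc_of_sh h3⟩
  · rintro ⟨u', ⟨u, hu, hequ⟩, v', ⟨v, hv, heqv⟩, hmem⟩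
    have hsh := sh_of_rconc u' v' w hmem
    have h1 : TrEq I w (u' ++ v') := sh_treq hsym hsh
    have h2 : TrEq I (u' ++ v') (u ++ v) :=
      (hequ.append_right v').trans (heqv.append_left u)
    exact ⟨u ++ v, ⟨u, hu, v, hv, rfl⟩, h1.trans h2⟩
end

section
/- For every language L over Σ and every word u: (1) D_u [L] = [D^I_u L], where D_u L = {v | u++v ∈ L} is the ordinary left quotient; (2) for all words v, u++v ∈ [L] if and only if v ∈ [D^I_u L]; and (3) u ∈ [L] if and only if ε ∈ D^I_u L. -/
open RegularExpression
open scoped Classical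

universe u

variable {α : Type u}

namespace TC6

variable {α : Type u} (I : α → α → Prop)

/-- Single swap step. -/
def Step (x y : List α) : Prop :=
  ∃ (p q : List α) (a b : α), I a b ∧ x = p ++ a :: b :: q ∧ y = p ++ b :: a :: q

theorem treq_of_step {x y : List α} (h : Step I x y) : TrEq I x y := by
  obtain ⟨p, q, a, b, hI, rfl, rfl⟩ := h
  simpa using TrEq.swap p q hI

theorem step_symm (hsym : Symmetric I) : Symmetric (Step I) := by
  rintro x y ⟨p, q, a, b, hI, rfl, rfl⟩
  exact ⟨p, q, b, a, hsym hI, rfl, rfl⟩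

theorem treq_iff_rtg (hsym : Symmetric I) {x y : List α} :
    TrEq I x y ↔ Relation.ReflTransGen (Step I) x y := by
  constructor
  · intro h
    induction h with
    | swap x y hI =>
        exact Relation.ReflTransGen.single ⟨x, y, _, _, hI, by simp, by simp⟩
    | refl u => exact .refl
    | symm h ih => exact (haveI : Std.Symm (Step I) := ⟨step_symm I hsym⟩; Relation.ReflTransGen.symmetric.symm _ _ ih)
    | trans h1 h2 ih1 ih2 => exact ih1.trans ih2
  · intro h
    induction h with
    | refl => exact .refl _
    | tail h hs ih => exact ih.trans (treq_of_step I hs)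

theorem treq_append_left {u v : List α} (w : List α) (h : TrEq I u v) :
    TrEq I (w ++ u) (w ++ v) := by
  induction h with
  | swap x y hI => simpa [List.append_assoc] using TrEq.swap (w ++ x) y hI
  | refl u => exact .refl _
  | symm h ih => exact ih.symm
  | trans h1 h2 ih1 ih2 => exact ih1.trans ih2

theorem treq_append_right {u v : List α} (w : List α) (h : TrEq I u v) :
    TrEq I (u ++ w) (v ++ w) := by
  induction h with
  | swap x y hI => simpa [List.append_assoc] using TrEq.swap (I := I) x (y ++ w) hI
  | refl u => exact .refl _
  | symm h ih => exact ih.symm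
  | trans h1 h2 ih1 ih2 => exact ih1.trans ih2

theorem treq_append {u u' v v' : List α} (h1 : TrEq I u u') (h2 : TrEq I v v') :
    TrEq I (u ++ v) (u' ++ v') :=
  (treq_append_right I v h1).trans (treq_append_left I u' h2)

theorem treq_cons (a : α) {u v : List α} (h : TrEq I u v) : TrEq I (a :: u) (a :: v) :=
  treq_append_left I [a] h

theorem treq_length {u v : List α} (h : TrEq I u v) : u.length = v.length := by
  induction h with
  | swap x y hI => simp
  | refl u => rfl
  | symm _ ih => omega
  | trans _ _ ih1 ih2 => omega

theorem treq_pull (hsym : Symmetric I) {b : α} {u w : List α} (h : ∀ c ∈ u, I b c) :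
    TrEq I (u ++ b :: w) (b :: (u ++ w)) := by
  induction u with
  | nil => exact .refl _
  | cons c u ih =>
      have h1 : TrEq I (c :: (u ++ b :: w)) (c :: b :: (u ++ w)) :=
        treq_cons I c (ih (fun x hx => h x (List.mem_cons_of_mem _ hx)))
      have h2 : TrEq I (c :: b :: (u ++ w)) (b :: c :: (u ++ w)) := by
        simpa using TrEq.swap (I := I) [] (u ++ w) (hsym (h c (by simp)))
      exact h1.trans h2

/-- Recursive characterization of scattering. -/
inductive Sc (I : α → α → Prop) : List α → List α → List α → Prop
  | nil : Sc I [] [] []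
  | consU (a : α) {u z v : List α} : Sc I u z v → Sc I (a :: u) (a :: z) v
  | consV (b : α) {u z v : List α} : (∀ c ∈ u, I b c) → Sc I u z v → Sc I u (b :: z) (b :: v)

theorem sc_nil_left : ∀ z : List α, Sc I [] z z := by
  intro z
  induction z with
  | nil => exact .nil
  | cons b z ih => exact .consV b (by simp) ih

theorem sc_append_u {u z v : List α} (u₀ : List α) (h : Sc I u z v) :
    Sc I (u₀ ++ u) (u₀ ++ z) v := by
  induction u₀ with
  | nil => exact h
  | cons a u₀ ih => exact .consU a ih

theorem sc_append_v {u z v : List α} {v₀ : List α} (hI : ∀ c ∈ v₀, ∀ d ∈ u, I c d)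
    (h : Sc I u z v) : Sc I u (v₀ ++ z) (v₀ ++ v) := by
  induction v₀ with
  | nil => exact h
  | cons b v₀ ih =>
      exact .consV b (fun d hd => hI b (by simp) d hd)
        (ih (fun c hc d hd => hI c (by simp [hc]) d hd))

theorem treq_of_sc (hsym : Symmetric I) {u z v : List α} (h : Sc I u z v) :
    TrEq I (u ++ v) z := by
  induction h with
  | nil => exact .refl _
  | consU a h ih => exact treq_cons I a ih
  | consV b hb h ih => exact (treq_pull I hsym hb).trans (treq_cons I b ih)

theorem split_three {x y p q : List α} {a b c : α}
    (h : x ++ a :: y = p ++ b :: c :: q) :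
    (∃ t, p = x ++ a :: t ∧ y = t ++ b :: c :: q) ∨
    (p = x ∧ b = a ∧ y = c :: q) ∨
    (p ++ [b] = x ∧ c = a ∧ y = q) ∨
    (∃ t, p ++ b :: c :: t = x ∧ q = t ++ a :: y) := by
  have h' : x ++ (a :: y) = p ++ (b :: c :: q) := by simpa using h
  rcases List.append_eq_append_iff.mp h' with ⟨t, hp, ht⟩ | ⟨t, hx2, ht⟩
  · cases t with
    | nil =>
        simp only [List.nil_append, List.cons.injEq] at ht
        refine Or.inr (Or.inl ⟨by simpa using hp, ht.1.symm, ht.2⟩)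
    | cons d t =>
        simp only [List.cons_append, List.cons.injEq] at ht
        obtain ⟨rfl, rfl⟩ := ht
        exact Or.inl ⟨t, hp, rfl⟩
  · cases t with
    | nil =>
        simp only [List.nil_append, List.cons.injEq] at ht
        refine Or.inr (Or.inl ⟨by simpa using hx2.symm, ht.1, ht.2.symm⟩)
    | cons e t =>
        simp only [List.cons_append, List.cons.injEq] at ht
        obtain ⟨rfl, ht⟩ := ht
        cases t with
        | nil =>
            simp only [List.nil_append, List.cons.injEq] at ht
            exact Or.inr (Or.inr (Or.inl ⟨hx2.symm, ht.1, ht.2.symm⟩))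
        | cons f t =>
            simp only [List.cons_append, List.cons.injEq] at ht
            obtain ⟨rfl, rfl⟩ := ht
            exact Or.inr (Or.inr (Or.inr ⟨t, hx2.symm, rfl⟩))

theorem step_extract (hsym : Symmetric I) {x y z : List α} {a : α}
    (h : Step I (x ++ a :: y) z) (hx : ∀ c ∈ x, I c a) :
    ∃ x' y', z = x' ++ a :: y' ∧ (∀ c ∈ x', I c a) ∧ TrEq I (x ++ y) (x' ++ y') := by
  obtain ⟨p, q, b, c, hI, heq, rfl⟩ := h
  rcases split_three heq with ⟨t, rfl, rfl⟩ | ⟨rfl, rfl, rfl⟩ | ⟨hpx, rfl, rfl⟩ | ⟨t, hpx, rfl⟩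
  · -- p = x ++ a :: t, y = t ++ b :: c :: q
    refine ⟨x, t ++ c :: b :: q, by simp, hx, ?_⟩
    have := TrEq.swap (I := I) (x ++ t) q hI
    simpa [List.append_assoc] using this
  · -- p = x, b = a, y = c :: q
    refine ⟨p ++ [c], q, by simp, ?_, ?_⟩
    · intro d hd
      rcases List.mem_append.mp hd with hd | hd
      · exact hx d hd
      · simp only [List.mem_singleton] at hd; subst hd; exact hsym hI
    · simpa using TrEq.refl (I := I) (p ++ c :: q)
  · -- p ++ [b] = x, c = a, y = q
    subst hpx
    refine ⟨p, b :: y, by simp, ?_, ?_⟩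
    · intro d hd
      exact hx d (by simp [hd])
    · simpa [List.append_assoc] using TrEq.refl (I := I) (p ++ b :: y)
  · -- p ++ b :: c :: t = x, q = t ++ a :: y
    subst hpx
    refine ⟨p ++ c :: b :: t, y, by simp [List.append_assoc], ?_, ?_⟩
    · intro d hd
      apply hx d
      simp only [List.mem_append, List.mem_cons] at hd ⊢
      tauto
    · have := TrEq.swap (I := I) p (t ++ y) hI
      simpa [List.append_assoc] using this

theorem rtg_extract (hsym : Symmetric I) {m z : List α}
    (h : Relation.ReflTransGen (Step I) m z) :
    ∀ x y a, m = x ++ a :: y → (∀ c ∈ x, I c a) →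
      ∃ x' y', z = x' ++ a :: y' ∧ (∀ c ∈ x', I c a) ∧ TrEq I (x ++ y) (x' ++ y') := by
  induction h with
  | refl => exact fun x y a hm hx => ⟨x, y, hm, hx, .refl _⟩
  | tail h1 hs ih =>
      intro x y a hm hx
      obtain ⟨x1, y1, rfl, hx1, ht1⟩ := ih x y a hm hx
      obtain ⟨x2, y2, h2, hx2, ht2⟩ := step_extract I hsym hs hx1
      exact ⟨x2, y2, h2, hx2, ht1.trans ht2⟩

theorem treq_cons_extract (hsym : Symmetric I) {a : α} {w z : List α}
    (h : TrEq I (a :: w) z) :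
    ∃ x y, z = x ++ a :: y ∧ (∀ c ∈ x, I c a) ∧ TrEq I w (x ++ y) := by
  have h' := (treq_iff_rtg I hsym).mp h
  obtain ⟨x, y, hz, hx, ht⟩ := rtg_extract I hsym h' [] w a rfl (by simp)
  exact ⟨x, y, hz, hx, ht⟩

theorem sc_insert {a : α} : ∀ (x : List α) {u y v : List α}, Sc I u (x ++ y) v →
    (∀ c ∈ x, I c a) →
    ∃ p q, u = p ++ q ∧ (∀ c ∈ p, I c a) ∧ Sc I (p ++ a :: q) (x ++ a :: y) v := by
  intro x
  induction x with
  | nil =>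
      intro u y v h hx
      exact ⟨[], u, rfl, by simp, .consU a h⟩
  | cons c x ih =>
      intro u y v h hx
      cases h with
      | consU _ h' =>
          obtain ⟨p, q, rfl, hp, hsc⟩ := ih h' (fun d hd => hx d (by simp [hd]))
          refine ⟨c :: p, q, rfl, ?_, .consU c hsc⟩
          intro d hd
          rcases List.mem_cons.mp hd with rfl | hd
          · exact hx d (by simp)
          · exact hp d hd
      | consV _ hcb h' =>
          obtain ⟨p, q, rfl, hp, hsc⟩ := ih h' (fun d hd => hx d (by simp [hd]))
          refine ⟨p, q, rfl, hp, .consV c ?_ hsc⟩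
          intro d hd
          rcases List.mem_append.mp hd with hd | hd
          · exact hcb d (List.mem_append.mpr (Or.inl hd))
          · rcases List.mem_cons.mp hd with rfl | hd
            · exact hx c (by simp)
            · exact hcb d (List.mem_append.mpr (Or.inr hd))

theorem treq_split (hsym : Symmetric I) :
    ∀ (u : List α) {v z : List α}, TrEq I (u ++ v) z →
      ∃ u' v', TrEq I u u' ∧ Sc I u' z v' ∧ TrEq I v' v := by
  intro u
  induction u with
  | nil =>
      intro v z h
      exact ⟨[], z, .refl _, sc_nil_left I z, h.symm⟩
  | cons a u ih =>
      intro v z h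
      obtain ⟨x, y, rfl, hx, h1⟩ := treq_cons_extract I hsym h
      obtain ⟨u', v', hu, hsc, hv⟩ := ih h1
      obtain ⟨p, q, hu', hp, hsc'⟩ := sc_insert I x hsc hx
      refine ⟨p ++ a :: q, v', ?_, hsc', hv⟩
      have h2 : TrEq I (a :: u) (a :: (p ++ q)) := by
        rw [← hu']; exact treq_cons I a hu
      have h3 : TrEq I (p ++ a :: q) (a :: (p ++ q)) :=
        treq_pull I hsym (fun c hc => hsym (hp c hc))
      exact h2.trans h3.symm

theorem flatten_range_succ {β : Type*} (f : ℕ → List β) (n : ℕ) :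
    ((List.range (n+1)).map f).flatten
      = f 0 ++ ((List.range n).map (fun i => f (i + 1))).flatten := by
  rw [List.range_succ_eq_map]
  simp [List.map_map, Function.comp_def]

theorem mem_flatten_range {β : Type*} (f : ℕ → List β) (n : ℕ) {d : β}
    (hd : d ∈ ((List.range n).map f).flatten) : ∃ i, i < n ∧ d ∈ f i := by
  simp only [List.mem_flatten, List.mem_map] at hd
  obtain ⟨l, ⟨i, hi, rfl⟩, hdl⟩ := hd
  exact ⟨i, List.mem_range.mp hi, hdl⟩

theorem map_range_congr {β : Type*} (f g : ℕ → β) (n : ℕ) (h : ∀ i < n, f i = g i) :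
    (List.range n).map f = (List.range n).map g :=
  List.map_congr_left (fun i hi => h i (List.mem_range.mp hi))

theorem sc_of_scatN : ∀ (n : ℕ) {u z v : List α}, ScatN I n u z v → Sc I u z v := by
  intro n
  induction n with
  | zero =>
      rintro u z v ⟨us, vs, -, -, hu, hv, hz, -⟩
      simp only [List.range_zero, List.range_succ, List.map_nil, List.flatten_nil,
        List.nil_append, List.map_cons, List.flatten_cons, List.flatten_nil,
        List.append_nil, List.map_append] at hu hv hz
      subst hu; subst hv; subst hz
      exact sc_nil_left I _
  | succ n ih =>
      rintro u z v ⟨us, vs, hus, hvs, hu, hv, hz, hind⟩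
      have hsc : Sc I (((List.range n).map (fun i => us (i + 2))).flatten)
          (vs 1 ++ ((List.range n).map (fun i => us (i + 2) ++ vs (i + 2))).flatten)
          (vs 1 ++ ((List.range n).map (fun j => vs (j + 2))).flatten) := by
        apply ih
        refine ⟨fun i => us (i + 1), fun j => vs (j + 1), ?_, ?_, ?_, ?_, ?_, ?_⟩
        · intro i h1 h2; exact hus (i + 1) (by omega) (by omega)
        · intro j h1 h2; exact hvs (j + 1) (by omega) (by omega)
        · rfl
        · rw [flatten_range_succ]
        · rfl
        · intro i j h1 h2 h3; exact hind (i + 1) (j + 1) (by omega) (by omega) (by omega)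
      have hsc2 := sc_append_u I (us 1) hsc
      have hsc3 : Sc I (us 1 ++ ((List.range n).map (fun i => us (i + 2))).flatten)
          (vs 0 ++ (us 1 ++ (vs 1 ++ ((List.range n).map (fun i => us (i + 2) ++ vs (i + 2))).flatten)))
          (vs 0 ++ (vs 1 ++ ((List.range n).map (fun j => vs (j + 2))).flatten)) := by
        apply sc_append_v I ?_ hsc2
        intro c hc d hd
        rcases List.mem_append.mp hd with hd | hd
        · exact hind 1 0 (by omega) (by omega) (by omega) c hc d hd
        · obtain ⟨i, hi, hdi⟩ := mem_flatten_range _ _ hd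
          exact hind (i + 2) 0 (by omega) (by omega) (by omega) c hc d hdi
      have eu : u = us 1 ++ ((List.range n).map (fun i => us (i + 2))).flatten := by
        rw [hu, flatten_range_succ]
      have ev : v = vs 0 ++ (vs 1 ++ ((List.range n).map (fun j => vs (j + 2))).flatten) := by
        rw [hv, flatten_range_succ]
        congr 1
        rw [flatten_range_succ]
      have ez : z = vs 0 ++ (us 1 ++ (vs 1 ++ ((List.range n).map (fun i => us (i + 2) ++ vs (i + 2))).flatten)) := by
        rw [hz, flatten_range_succ]
        simp [List.append_assoc]
      rw [eu, ev, ez]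
      exact hsc3

theorem scat_of_sc {u z v : List α} (h : Sc I u z v) : ∃ n, ScatN I n u z v := by
  induction h with
  | nil =>
      refine ⟨0, fun _ => [], fun _ => [], ?_, ?_, ?_, ?_, ?_, ?_⟩
      · intro i h1 h2; omega
      · intro j h1 h2; omega
      · simp
      · simp
      · simp
      · intro i j h1 h2 h3; omega
  | @consU a u z v h ih =>
      obtain ⟨n, us, vs, hus, hvs, hu, hv, hz, hind⟩ := ih
      by_cases h0 : vs 0 = []
      · match n, hus, hvs, hu, hv, hz, hind with
        | 0, hus, hvs, hu, hv, hz, hind =>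
          simp only [List.range_zero, List.map_nil, List.flatten_nil, List.append_nil] at hu hv hz
          rw [List.range_succ_eq_map] at hv
          simp only [List.map_cons, List.map_nil, List.flatten_cons, List.flatten_nil,
            List.append_nil, List.map_map] at hv
          subst hu; subst hv; rw [hz, h0]
          refine ⟨1, fun _ => [a], fun _ => [], ?_, ?_, ?_, ?_, ?_, ?_⟩
          · intro i h1 h2; simp
          · intro j h1 h2; omega
          · simp [List.range_succ]
          · simp [List.range_succ]
          · simp [List.range_succ]
          · intro i j h1 h2 h3
            intro c hc; simp at hc
        | (m+1), hus, hvs, hu, hv, hz, hind =>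
          refine ⟨m+1, fun i => if i = 1 then a :: us 1 else us i, vs, ?_, hvs, ?_, hv, ?_, ?_⟩
          · intro i h1 h2
            by_cases hi : i = 1 <;> simp [hi]
            exact hus i h1 h2
          · rw [flatten_range_succ]
            simp only [if_pos rfl]
            rw [map_range_congr (fun i => if i + 1 + 1 = 1 then a :: us 1 else us (i+1+1))
              (fun i => us (i + 2)) m (by intro i hi; simp)]
            rw [hu, flatten_range_succ]
            rfl
          · rw [flatten_range_succ]
            simp only [if_pos rfl]
            rw [map_range_congr (fun i => (if i + 1 + 1 = 1 then a :: us 1 else us (i+1+1)) ++ vs (i+1+1))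
              (fun i => us (i + 2) ++ vs (i + 2)) m (by intro i hi; simp)]
            rw [hz, flatten_range_succ, h0]
            simp [List.append_assoc]
          · intro i j h1 h2 h3
            by_cases hi : i = 1
            · subst hi
              have hj : j = 0 := by omega
              subst hj
              rw [h0]
              intro c hc
              simp at hc
            · simp only [if_neg hi]
              exact hind i j h1 h2 h3
      · refine ⟨n+1, fun i => if i = 1 then [a] else us (i-1),
          fun j => if j = 0 then [] else vs (j-1), ?_, ?_, ?_, ?_, ?_, ?_⟩
        · intro i h1 h2
          by_cases hi : i = 1
          · simp [hi]
          · simp only [if_neg hi]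
            exact hus (i-1) (by omega) (by omega)
        · intro j h1 h2
          have hj : ¬ (j = 0) := by omega
          simp only [if_neg hj]
          by_cases hj1 : j = 1
          · subst hj1; simpa using h0
          · exact hvs (j-1) (by omega) (by omega)
        · rw [flatten_range_succ]
          simp only [if_pos rfl]
          rw [map_range_congr (fun i => if i + 1 + 1 = 1 then [a] else us (i+1+1-1))
            (fun i => us (i + 1)) n (by intro i hi; simp)]
          rw [hu]; rfl
        · rw [flatten_range_succ]
          simp only [if_pos rfl]
          rw [map_range_congr (fun j => if j + 1 = 0 then [] else vs (j+1-1))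
            (fun j => vs j) (n+1) (by intro j hj; simp)]
          rw [hv]; rfl
        · rw [flatten_range_succ]
          simp only [if_pos rfl]
          rw [map_range_congr
            (fun i => (if i + 1 + 1 = 1 then [a] else us (i+1+1-1)) ++ (if i + 1 + 1 = 0 then [] else vs (i+1+1-1)))
            (fun i => us (i + 1) ++ vs (i + 1)) n (by intro i hi; simp)]
          rw [hz]
          simp
        · intro i j h1 h2 h3
          by_cases hi : i = 1
          · have hj : j = 0 := by omega
            subst hj
            intro c hc
            simp at hc
          · simp only [if_neg hi]
            have hj0 : ¬ (j = 0) → WIndep I (vs (j-1)) (us (i-1)) := by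
              intro hj
              exact hind (i-1) (j-1) (by omega) (by omega) (by omega)
            by_cases hj : j = 0
            · subst hj
              intro c hc; simp at hc
            · simp only [if_neg hj]
              exact hj0 hj
  | @consV b u z v hb h ih =>
      obtain ⟨n, us, vs, hus, hvs, hu, hv, hz, hind⟩ := ih
      refine ⟨n, us, fun j => if j = 0 then b :: vs 0 else vs j, hus, ?_, hu, ?_, ?_, ?_⟩
      · intro j h1 h2
        have hj : ¬ (j = 0) := by omega
        simp only [if_neg hj]
        exact hvs j h1 h2
      · rw [flatten_range_succ]
        simp only [if_pos rfl]
        rw [map_range_congr (fun j => if j + 1 = 0 then b :: vs 0 else vs (j+1))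
          (fun j => vs (j + 1)) n (by intro j hj; simp)]
        rw [hv, flatten_range_succ]
        rfl
      · simp only [if_pos rfl]
        rw [map_range_congr (fun i => us (i+1) ++ (if i + 1 = 0 then b :: vs 0 else vs (i+1)))
          (fun i => us (i + 1) ++ vs (i + 1)) n (by intro i hi; simp)]
        rw [hz]
        rfl
      · intro i j h1 h2 h3
        by_cases hj : j = 0
        · subst hj
          simp only [if_pos rfl]
          intro c hc d hd
          rcases List.mem_cons.mp hc with rfl | hc
          · apply hb d
            rw [hu]
            apply List.mem_flatten.mpr
            refine ⟨us i, ?_, hd⟩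
            apply List.mem_map.mpr
            refine ⟨i - 1, List.mem_range.mpr (by omega), ?_⟩
            congr 1
            omega
          · exact hind i 0 h1 h2 h3 c hc d hd
        · simp only [if_neg hj]
          exact hind i j h1 h2 h3

end TC6

/-- D_u [L] = [D^I_u L]; u++v ∈ [L] iff v ∈ [D^I_u L]; u ∈ [L] iff ε ∈ D^I_u L. -/
theorem stmt6 {α : Type u} [Fintype α] (I : α → α → Prop)
    (hirr : Irreflexive I) (hsym : Symmetric I) (L : Set (List α)) (u : List α) :
    {v | u ++ v ∈ TrClosure I L} = TrClosure I (RDeriv I u L) ∧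
    (∀ v, u ++ v ∈ TrClosure I L ↔ v ∈ TrClosure I (RDeriv I u L)) ∧
    (u ∈ TrClosure I L ↔ [] ∈ RDeriv I u L) := by
  have key : ∀ v, u ++ v ∈ TrClosure I L ↔ v ∈ TrClosure I (RDeriv I u L) := by
    intro v
    constructor
    · rintro ⟨z, hz, ht⟩
      obtain ⟨u', v', hu, hsc, hv⟩ := TC6.treq_split I hsym u ht
      exact ⟨v', ⟨z, hz, u', hu, TC6.scat_of_sc I hsc⟩, hv.symm⟩
    · rintro ⟨v', ⟨z, hz, u', hu, hscat⟩, hvv'⟩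
      obtain ⟨n, hn⟩ := hscat
      have hsc := TC6.sc_of_scatN I n hn
      have h1 : TrEq I (u' ++ v') z := TC6.treq_of_sc I hsym hsc
      have h2 : TrEq I (u ++ v) (u' ++ v') := TC6.treq_append I hu hvv'
      exact ⟨z, hz, h2.trans h1⟩
  refine ⟨Set.ext (fun v => key v), key, ?_⟩
  have h0 := key []
  rw [List.append_nil] at h0
  rw [h0]
  constructor
  · rintro ⟨z, hz, ht⟩
    have hl := TC6.treq_length I ht
    simp only [List.length_nil] at hl
    have : z = [] := List.length_eq_zero_iff.mp hl.symm
    subst this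
    exact hz
  · intro h
    exact ⟨[], h, .refl _⟩
end
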